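/- (Region B of the atomic-limit phase diagram) Let r = 2. Assume W > 0, I > zW/4, and |μ| < I. Then H(C) = H_i^0(C) − μ·N_i(C) attains its minimum over all ion configurations exactly at the configurations with n_x = 1 for every site x ∈ Λ (each site singly occupied, with arbitrary species); the number of such minimizing configurations equals 2^{|Λ|}. -/
import Mathlib


open Finset

/-- Occupation number (0 or 1) attached to a Boolean occupancy variable. -/
noncomputable def occ (b : Bool) : ℝ := if b then 1 else 0

/-- Total number of ions at site `x` (as a real number): `n_x = Σ_σ n_{x,σ}`. -/
noncomputable def nsite {V : Type*} {r : ℕ} (C : V → Fin r → Bool) (x : V) : ℝ :=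
  ∑ σ : Fin r, occ (C x σ)

/-- Total number of ions at site `x` (as a natural number). -/
def nnat {V : Type*} {r : ℕ} (C : V → Fin r → Bool) (x : V) : ℕ :=
  ∑ σ : Fin r, (if C x σ then 1 else 0)

/-- The classical Hamiltonian
`H_i^0(C) = 2I Σ_x Σ_{σ'<σ''} (n_{x,σ'} - 1/2)(n_{x,σ''} - 1/2)
          + (W/2) Σ_{⟨x,y⟩} (n_x - r/2)(n_y - r/2)`,
where the sum over edges `⟨x,y⟩` (each edge counted once) is written as half the
symmetric double sum over ordered adjacent pairs. -/
noncomputable def H0 {V : Type*} [Fintype V] (G : SimpleGraph V) [DecidableRel G.Adj]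
    (r : ℕ) (I W : ℝ) (C : V → Fin r → Bool) : ℝ :=
  2 * I * ∑ x : V, ∑ p ∈ Finset.univ.filter (fun p : Fin r × Fin r => p.1 < p.2),
      (occ (C x p.1) - 1 / 2) * (occ (C x p.2) - 1 / 2)
  + W / 2 * ((∑ x : V, ∑ y : V,
      (if G.Adj x y then (nsite C x - r / 2) * (nsite C y - r / 2) else 0)) / 2)

/-- Total ion number `N_i(C) = Σ_{x,σ} n_{x,σ}` (as a real number). -/
noncomputable def Ni {V : Type*} {r : ℕ} [Fintype V] (C : V → Fin r → Bool) : ℝ :=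
  ∑ x : V, ∑ σ : Fin r, occ (C x σ)

/-- Grand-canonical classical Hamiltonian `H(C) = H_i^0(C) − μ·N_i(C)` for two species. -/
noncomputable def Hgc {V : Type*} [Fintype V] (G : SimpleGraph V) [DecidableRel G.Adj]
    (I W μ : ℝ) (C : V → Fin 2 → Bool) : ℝ :=
  H0 G 2 I W C - μ * Ni C

/-! ### auxiliary -/

noncomputable def axx {V : Type*} (C : V → Fin 2 → Bool) (x : V) : ℝ := nsite C x - 1

lemma nsite_two {V : Type*} (C : V → Fin 2 → Bool) (x : V) :
    nsite C x = occ (C x 0) + occ (C x 1) := by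
  simp [nsite, Fin.sum_univ_two]

lemma axx_cases {V : Type*} (C : V → Fin 2 → Bool) (x : V) :
    axx C x = -1 ∨ axx C x = 0 ∨ axx C x = 1 := by
  cases h0 : C x 0 <;> cases h1 : C x 1 <;>
    simp [axx, nsite_two, occ, h0, h1]

lemma axx_eq_zero_iff {V : Type*} (C : V → Fin 2 → Bool) (x : V) :
    axx C x = 0 ↔ nnat C x = 1 := by
  cases h0 : C x 0 <;> cases h1 : C x 1 <;>
    simp only [axx, nsite_two, occ, nnat, Fin.sum_univ_two, h0, h1] <;> norm_num

lemma hfilter2 : (Finset.univ.filter (fun p : Fin 2 × Fin 2 => p.1 < p.2)) =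
    {((0 : Fin 2), (1 : Fin 2))} := by decide

lemma site_id (I μ : ℝ) (b c : Bool) :
    2 * I * ((occ b - 1/2) * (occ c - 1/2)) - μ * (occ b + occ c) =
      -(I/2) - μ + (I * (occ b + occ c - 1)^2 - μ * (occ b + occ c - 1)) := by
  cases b <;> cases c <;> simp [occ] <;> ring

lemma hgc_decomp {V : Type*} [Fintype V] (G : SimpleGraph V) [DecidableRel G.Adj]
    (I W μ : ℝ) (C : V → Fin 2 → Bool) :
    Hgc G I W μ C =
      (∑ _x : V, (-(I/2) - μ)) + (∑ x : V, (I * axx C x ^ 2 - μ * axx C x))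
      + W / 4 * (∑ x : V, ∑ y : V, (if G.Adj x y then axx C x * axx C y else 0)) := by
  unfold Hgc H0 Ni
  simp only [hfilter2, Finset.sum_singleton]
  have hc : ((2:ℕ):ℝ) / 2 = 1 := by norm_num
  have h1 : ∀ x y : V,
      (if G.Adj x y then (nsite C x - ((2:ℕ):ℝ)/2) * (nsite C y - ((2:ℕ):ℝ)/2) else 0) =
      (if G.Adj x y then axx C x * axx C y else 0) := by
    intro x y; rw [hc]; rfl
  simp only [h1]
  have h2 : ∀ x : V, ∑ σ : Fin 2, occ (C x σ) = occ (C x 0) + occ (C x 1) := by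
    intro x; simp [Fin.sum_univ_two]
  simp only [h2]
  rw [Finset.mul_sum, Finset.mul_sum]
  have h3 : ∀ x : V,
      2 * I * ((occ (C x 0) - 1/2) * (occ (C x 1) - 1/2)) - μ * (occ (C x 0) + occ (C x 1)) =
      (-(I/2) - μ) + (I * axx C x ^ 2 - μ * axx C x) := by
    intro x
    have := site_id I μ (C x 0) (C x 1)
    rw [this]
    simp [axx, nsite_two]
  have key : (∑ x : V, 2 * I * ((occ (C x 0) - 1/2) * (occ (C x 1) - 1/2)))
      - ∑ x : V, μ * (occ (C x 0) + occ (C x 1)) =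
      (∑ _x : V, (-(I/2) - μ)) + ∑ x : V, (I * axx C x ^ 2 - μ * axx C x) := by
    rw [← Finset.sum_sub_distrib, ← Finset.sum_add_distrib]
    exact Finset.sum_congr rfl fun x _ => h3 x
  have hh : W / 2 * ((∑ x : V, ∑ y : V, (if G.Adj x y then axx C x * axx C y else 0)) / 2)
      = W / 4 * (∑ x : V, ∑ y : V, (if G.Adj x y then axx C x * axx C y else 0)) := by ring
  linarith [key, hh]

lemma sum_ite_adj_const {V : Type*} [Fintype V] (G : SimpleGraph V) [DecidableRel G.Adj]
    {z : ℕ} (hreg : G.IsRegularOfDegree z) (f : V → ℝ) (x : V) :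
    ∑ y : V, (if G.Adj x y then f x else 0) = (z : ℝ) * f x := by
  rw [← Finset.sum_filter, Finset.sum_const]
  have hcard : (Finset.univ.filter (fun y => G.Adj x y)).card = z := by
    rw [← hreg x, SimpleGraph.degree, SimpleGraph.neighborFinset_eq_filter]
  rw [hcard, nsmul_eq_mul]

lemma double_sum_reg {V : Type*} [Fintype V] (G : SimpleGraph V) [DecidableRel G.Adj]
    {z : ℕ} (hreg : G.IsRegularOfDegree z) (f : V → ℝ) :
    ∑ x : V, ∑ y : V, (if G.Adj x y then f x + f y else 0)
      = 2 * (z : ℝ) * ∑ x : V, f x := by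
  have split : ∀ x y : V, (if G.Adj x y then f x + f y else 0)
      = (if G.Adj x y then f x else 0) + (if G.Adj x y then f y else 0) := by
    intro x y; split <;> simp
  simp only [split, Finset.sum_add_distrib]
  have h1 : ∑ x : V, ∑ y : V, (if G.Adj x y then f x else 0) = ∑ x : V, (z : ℝ) * f x :=
    Finset.sum_congr rfl fun x _ => sum_ite_adj_const G hreg f x
  have h2 : ∑ x : V, ∑ y : V, (if G.Adj x y then f y else 0) = ∑ y : V, (z : ℝ) * f y := by
    rw [Finset.sum_comm]
    refine Finset.sum_congr rfl fun y _ => ?_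
    have hsym : ∀ x : V, (if G.Adj x y then f y else 0) = (if G.Adj y x then f y else 0) := by
      intro x
      by_cases h : G.Adj x y
      · rw [if_pos h, if_pos h.symm]
      · rw [if_neg h, if_neg (fun h' => h h'.symm)]
    simp only [hsym]
    exact sum_ite_adj_const G hreg f y
  rw [h1, h2, ← Finset.mul_sum]
  ring

lemma T_nonneg {z : ℕ} {I W μ : ℝ} (hW : 0 < W) (hIW : (z : ℝ) * W / 4 < I)
    (hmu : |μ| < I) {a b : ℝ}
    (ha : a = -1 ∨ a = 0 ∨ a = 1) (hb : b = -1 ∨ b = 0 ∨ b = 1) :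
    0 ≤ (I * a ^ 2 - μ * a) + (I * b ^ 2 - μ * b) + (z : ℝ) * W / 2 * (a * b) := by
  obtain ⟨h1, h2⟩ := abs_lt.mp hmu
  have hz' : (0 : ℝ) ≤ (z : ℝ) := Nat.cast_nonneg z
  have hzw : (0 : ℝ) ≤ (z : ℝ) * W := mul_nonneg hz' hW.le
  rcases ha with h | h | h <;> rcases hb with h' | h' | h' <;> subst h <;> subst h' <;>
    nlinarith [hzw, h1, h2, hIW]

lemma T_pos {z : ℕ} {I W μ : ℝ} (hW : 0 < W) (hIW : (z : ℝ) * W / 4 < I)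
    (hmu : |μ| < I) {a b : ℝ}
    (ha : a = -1 ∨ a = 1) (hb : b = -1 ∨ b = 0 ∨ b = 1) :
    0 < (I * a ^ 2 - μ * a) + (I * b ^ 2 - μ * b) + (z : ℝ) * W / 2 * (a * b) := by
  obtain ⟨h1, h2⟩ := abs_lt.mp hmu
  have hz' : (0 : ℝ) ≤ (z : ℝ) := Nat.cast_nonneg z
  have hzw : (0 : ℝ) ≤ (z : ℝ) * W := mul_nonneg hz' hW.le
  rcases ha with h | h <;> rcases hb with h' | h' | h' <;> subst h <;> subst h' <;>
    nlinarith [hzw, h1, h2, hIW]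

lemma hgc_decomp2 {V : Type*} [Fintype V] (G : SimpleGraph V) [DecidableRel G.Adj]
    {z : ℕ} (hreg : G.IsRegularOfDegree z) (I W μ : ℝ) (C : V → Fin 2 → Bool) :
    2 * (z : ℝ) * (Hgc G I W μ C - ∑ _x : V, (-(I/2) - μ)) =
      ∑ x : V, ∑ y : V, (if G.Adj x y then
        (I * axx C x ^ 2 - μ * axx C x) + (I * axx C y ^ 2 - μ * axx C y)
          + (z : ℝ) * W / 2 * (axx C x * axx C y) else 0) := by
  have hptw : ∀ x y : V, (if G.Adj x y then
        (I * axx C x ^ 2 - μ * axx C x) + (I * axx C y ^ 2 - μ * axx C y)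
          + (z : ℝ) * W / 2 * (axx C x * axx C y) else 0)
      = (if G.Adj x y then
          (I * axx C x ^ 2 - μ * axx C x) + (I * axx C y ^ 2 - μ * axx C y) else 0)
        + (z : ℝ) * W / 2 * (if G.Adj x y then axx C x * axx C y else 0) := by
    intro x y; split <;> ring
  simp only [hptw, Finset.sum_add_distrib, ← Finset.mul_sum]
  rw [double_sum_reg G hreg (fun x => I * axx C x ^ 2 - μ * axx C x)]
  rw [hgc_decomp G I W μ C]
  ring

lemma hgc_lower {V : Type*} [Fintype V] (G : SimpleGraph V) [DecidableRel G.Adj]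
    {z : ℕ} (hz : 2 ≤ z) (hreg : G.IsRegularOfDegree z) {I W μ : ℝ}
    (hW : 0 < W) (hIW : (z : ℝ) * W / 4 < I) (hmu : |μ| < I) (C : V → Fin 2 → Bool) :
    (∑ _x : V, (-(I/2) - μ)) ≤ Hgc G I W μ C := by
  have hzpos : (0 : ℝ) < 2 * (z : ℝ) := by
    have : (0 : ℝ) < (z : ℝ) := by exact_mod_cast Nat.lt_of_lt_of_le Nat.zero_lt_two hz
    linarith
  have hsum : 0 ≤ 2 * (z : ℝ) * (Hgc G I W μ C - ∑ _x : V, (-(I/2) - μ)) := by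
    rw [hgc_decomp2 G hreg I W μ C]
    refine Finset.sum_nonneg fun x _ => Finset.sum_nonneg fun y _ => ?_
    split
    · exact T_nonneg hW hIW hmu (axx_cases C x) (axx_cases C y)
    · exact le_refl 0
  by_contra hcon
  push_neg at hcon
  have : 2 * (z : ℝ) * (Hgc G I W μ C - ∑ _x : V, (-(I/2) - μ)) < 0 :=
    mul_neg_of_pos_of_neg hzpos (by linarith)
  linarith

lemma hgc_strict {V : Type*} [Fintype V] (G : SimpleGraph V) [DecidableRel G.Adj]
    {z : ℕ} (hz : 2 ≤ z) (hreg : G.IsRegularOfDegree z) {I W μ : ℝ}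
    (hW : 0 < W) (hIW : (z : ℝ) * W / 4 < I) (hmu : |μ| < I) (C : V → Fin 2 → Bool)
    {x0 : V} (hx0 : axx C x0 ≠ 0) :
    (∑ _x : V, (-(I/2) - μ)) < Hgc G I W μ C := by
  have hzpos : (0 : ℝ) < 2 * (z : ℝ) := by
    have : (0 : ℝ) < (z : ℝ) := by exact_mod_cast Nat.lt_of_lt_of_le Nat.zero_lt_two hz
    linarith
  -- x0 has a neighbor
  obtain ⟨y0, hy0⟩ : ∃ y0, G.Adj x0 y0 := by
    have hd : 0 < G.degree x0 := by rw [hreg x0]; omega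
    exact (SimpleGraph.degree_pos_iff_exists_adj G x0).mp hd
  have ha : axx C x0 = -1 ∨ axx C x0 = 1 := by
    rcases axx_cases C x0 with h | h | h
    · exact Or.inl h
    · exact absurd h hx0
    · exact Or.inr h
  have hterm : ∀ x y : V, 0 ≤ (if G.Adj x y then
        (I * axx C x ^ 2 - μ * axx C x) + (I * axx C y ^ 2 - μ * axx C y)
          + (z : ℝ) * W / 2 * (axx C x * axx C y) else 0) := by
    intro x y; split
    · exact T_nonneg hW hIW hmu (axx_cases C x) (axx_cases C y)
    · exact le_refl 0
  have hsum : 0 < 2 * (z : ℝ) * (Hgc G I W μ C - ∑ _x : V, (-(I/2) - μ)) := by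
    rw [hgc_decomp2 G hreg I W μ C]
    refine Finset.sum_pos' (fun x _ => Finset.sum_nonneg fun y _ => hterm x y)
      ⟨x0, Finset.mem_univ x0, ?_⟩
    refine Finset.sum_pos' (fun y _ => hterm x0 y) ⟨y0, Finset.mem_univ y0, ?_⟩
    rw [if_pos hy0]
    exact T_pos hW hIW hmu ha (axx_cases C y0)
  by_contra hcon
  push_neg at hcon
  have : 2 * (z : ℝ) * (Hgc G I W μ C - ∑ _x : V, (-(I/2) - μ)) ≤ 0 :=
    mul_nonpos_of_nonneg_of_nonpos hzpos.le (by linarith)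
  linarith

lemma hgc_single {V : Type*} [Fintype V] (G : SimpleGraph V) [DecidableRel G.Adj]
    (I W μ : ℝ) (C : V → Fin 2 → Bool) (hC : ∀ x, nnat C x = 1) :
    Hgc G I W μ C = ∑ _x : V, (-(I/2) - μ) := by
  have ha : ∀ x, axx C x = 0 := fun x => (axx_eq_zero_iff C x).mpr (hC x)
  rw [hgc_decomp G I W μ C]
  simp [ha]

/-- The canonical single-occupancy configuration. -/
def Csingle (V : Type*) : V → Fin 2 → Bool := fun _ σ => decide (σ = 0)

lemma Csingle_nnat {V : Type*} (x : V) : nnat (Csingle V) x = 1 := by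
  simp [Csingle, nnat, Fin.sum_univ_two]

/-- Bijection between single-occupancy configurations and `V → Bool`. -/
def singEquiv (V : Type*) : {C : V → Fin 2 → Bool // ∀ x, nnat C x = 1} ≃ (V → Bool) where
  toFun C := fun x => C.1 x 0
  invFun f := ⟨fun x σ => if σ = 0 then f x else !(f x), fun x => by
    cases h : f x <;> simp [nnat, Fin.sum_univ_two, h]⟩
  left_inv := by
    rintro ⟨C, hC⟩
    ext x σ
    fin_cases σ
    · simp
    · have h := hC x
      simp only [nnat, Fin.sum_univ_two] at h
      cases h0 : C x 0 <;> cases h1 : C x 1 <;> simp [h0, h1] at h ⊢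
  right_inv f := by ext x; simp


/-- **Region B.** For `W > 0`, `I > zW/4` and `|μ| < I`, the minimizers of
`H(C) = H_i^0(C) − μ·N_i(C)` are exactly the configurations with every site singly
occupied, and their number is `2^{|Λ|}`. -/
theorem statement16
    {V : Type*} [Fintype V] [DecidableEq V]
    (G : SimpleGraph V) [DecidableRel G.Adj]
    (z : ℕ) (hz : 2 ≤ z)
    (hreg : G.IsRegularOfDegree z) (hconn : G.Connected)
    (Λe Λo : Finset V)
    (hcover : ∀ v : V, v ∈ Λe ∨ v ∈ Λo) (hdisj : Disjoint Λe Λo)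
    (hbip : ∀ x y : V, G.Adj x y → (x ∈ Λe ∧ y ∈ Λo) ∨ (x ∈ Λo ∧ y ∈ Λe))
    (I W μ : ℝ) (hW : 0 < W) (hIW : (z : ℝ) * W / 4 < I) (hmu : |μ| < I) :
    {C : V → Fin 2 → Bool | ∀ C' : V → Fin 2 → Bool, Hgc G I W μ C ≤ Hgc G I W μ C'} =
      {C : V → Fin 2 → Bool | ∀ x : V, nnat C x = 1} ∧
    Nat.card {C : V → Fin 2 → Bool |
        ∀ C' : V → Fin 2 → Bool, Hgc G I W μ C ≤ Hgc G I W μ C'} =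
      2 ^ (Fintype.card V) := by
  have hsets : {C : V → Fin 2 → Bool | ∀ C' : V → Fin 2 → Bool,
      Hgc G I W μ C ≤ Hgc G I W μ C'} = {C : V → Fin 2 → Bool | ∀ x : V, nnat C x = 1} := by
    ext C
    simp only [Set.mem_setOf_eq]
    constructor
    · intro hmin
      by_contra hnot
      push_neg at hnot
      obtain ⟨x0, hx0⟩ := hnot
      have hax : axx C x0 ≠ 0 := fun h => hx0 ((axx_eq_zero_iff C x0).mp h)
      have hlt := hgc_strict G hz hreg hW hIW hmu C hax
      have hle := hmin (Csingle V)
      rw [hgc_single G I W μ (Csingle V) (fun x => Csingle_nnat x)] at hle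
      linarith
    · intro hall C'
      rw [hgc_single G I W μ C hall]
      exact hgc_lower G hz hreg hW hIW hmu C'
  refine ⟨hsets, ?_⟩
  rw [hsets]
  have := Nat.card_congr (singEquiv V)
  calc Nat.card {C : V → Fin 2 → Bool | ∀ x : V, nnat C x = 1}
      = Nat.card (V → Bool) := Nat.card_congr (singEquiv V)
    _ = 2 ^ (Fintype.card V) := by
        rw [Nat.card_eq_fintype_card, Fintype.card_fun, Fintype.card_bool]
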